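/- Let g ≥ 1, and for n ∈ g·ℕ consider the irreducible sl₂-representation L(n) of highest weight n, with character χ(L(n)) = Σ_{j=0}^{n} e^{n−2j}. Define Π_g on the group ring ℤ[ℤ] by Π_g(e^m) = e^{m/g} if g | m and 0 otherwise. If g is odd, then Π_g(χ(L(n))) = χ(L(n/g)). If g is even and n > 0, then Π_g(χ(L(n))) = χ(L(n/g)) + χ(L(n/g − 1)), and Π_g(χ(L(0))) = χ(L(0)). -/

import Mathlib

open Finset

/-- The character `χ(L(n)) = Σ_{j=0}^{n} e^{n−2j}` of the irreducible `sl₂`-representation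
of highest weight `n`, as an element of the group ring `ℤ[ℤ]`. -/
noncomputable def chi (n : ℕ) : AddMonoidAlgebra ℤ ℤ :=
  ∑ j ∈ Finset.range (n + 1), AddMonoidAlgebra.single ((n : ℤ) - 2 * j) (1 : ℤ)

/-- The additive map `Π_g : ℤ[ℤ] → ℤ[ℤ]` sending `e^m` to `e^{m/g}` if `g ∣ m`
and to `0` otherwise. -/
noncomputable def Pig (g : ℕ) (f : AddMonoidAlgebra ℤ ℤ) : AddMonoidAlgebra ℤ ℤ :=
  f.coeff.sum fun m c => if (g : ℤ) ∣ m then AddMonoidAlgebra.single (m / (g : ℤ)) c else 0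

/-- Langlands duality of characters in rank 1: for `n = g·m ∈ g·ℕ`,
if `g` is odd then `Π_g(χ(L(n))) = χ(L(n/g))`; if `g` is even and `n > 0` then
`Π_g(χ(L(n))) = χ(L(n/g)) + χ(L(n/g − 1))`, and `Π_g(χ(L(0))) = χ(L(0))`. -/
lemma Pig_chi (g n : ℕ) :
    Pig g (chi n) = ∑ j ∈ range (n + 1),
      if (g : ℤ) ∣ ((n : ℤ) - 2 * j) then AddMonoidAlgebra.single (((n : ℤ) - 2 * j) / g) (1 : ℤ) else 0 := by
  unfold Pig chi
  rw [AddMonoidAlgebra.coeff_sum, ← Finsupp.sum_finset_sum_index (fun a => by split <;> simp)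
      (fun a b₁ b₂ => by split <;> simp [AddMonoidAlgebra.single_add])]
  refine Finset.sum_congr rfl fun j _ => ?_
  rw [AddMonoidAlgebra.coeff_single, Finsupp.sum_single_index (by split <;> simp)]

theorem langlands_character_duality_rank1 (g m : ℕ) (hg : 1 ≤ g) :
    (Odd g → Pig g (chi (g * m)) = chi m) ∧
    (Even g → 0 < m → Pig g (chi (g * m)) = chi m + chi (m - 1)) ∧
    (Even g → Pig g (chi 0) = chi 0) := by
  have hg0 : (g : ℤ) ≠ 0 := Int.natCast_ne_zero.mpr (by omega)
  refine ⟨?_, ?_, ?_⟩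
  · intro hodd
    rw [Pig_chi]
    have hcond : ∀ j ∈ range (g * m + 1),
        (if (g : ℤ) ∣ (((g*m : ℕ) : ℤ) - 2 * j) then
          AddMonoidAlgebra.single ((((g*m : ℕ) : ℤ) - 2 * j) / g) (1 : ℤ) else 0)
        = if g ∣ j then AddMonoidAlgebra.single ((((g*m : ℕ) : ℤ) - 2 * j) / g) (1 : ℤ) else 0 := by
      intro j _
      congr 1
      rw [eq_iff_iff]
      have hgm : (g : ℤ) ∣ ((g*m : ℕ) : ℤ) := ⟨m, by push_cast; ring⟩
      constructor
      · intro h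
        have h2 : (g : ℤ) ∣ 2 * j := by
          have := dvd_sub hgm h
          simpa using this
        have h2' : g ∣ 2 * j := by exact_mod_cast h2
        exact (hodd.coprime_two_right).dvd_of_dvd_mul_left h2'
      · intro h
        have : (g : ℤ) ∣ (j : ℤ) := by exact_mod_cast h
        exact dvd_sub hgm (Dvd.dvd.mul_left this 2)
    rw [Finset.sum_congr rfl hcond, ← Finset.sum_filter]
    unfold chi
    refine Finset.sum_nbij' (fun j => j / g) (fun k => g * k) ?_ ?_ ?_ ?_ ?_
    · intro j hj
      simp only [mem_filter, mem_range] at hj ⊢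
      obtain ⟨k, rfl⟩ := hj.2
      rw [Nat.mul_div_cancel_left _ hg]
      have := Nat.lt_succ_iff.mp hj.1
      exact Nat.lt_succ_of_le (Nat.le_of_mul_le_mul_left this hg)
    · intro k hk
      simp only [mem_filter, mem_range] at hk ⊢
      constructor
      · calc g * k ≤ g * m := Nat.mul_le_mul_left g (by omega)
          _ < g * m + 1 := by omega
      · exact Dvd.intro k rfl
    · intro j hj
      simp only [mem_filter] at hj
      exact Nat.mul_div_cancel' hj.2
    · intro k _; exact Nat.mul_div_cancel_left _ hg
    · intro j hj
      simp only [mem_filter, mem_range] at hj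
      obtain ⟨k, rfl⟩ := hj.2
      simp only [Nat.mul_div_cancel_left _ hg]
      congr 1
      push_cast
      rw [show (g : ℤ) * m - 2 * (g * k) = g * (m - 2 * k) by ring,
        Int.mul_ediv_cancel_left _ hg0]
  · intro heven hm
    have h2 : g % 2 = 0 := Nat.even_iff.mp heven
    obtain ⟨h, rfl⟩ : ∃ h, g = 2 * h := ⟨g / 2, by omega⟩
    have hh : 1 ≤ h := by omega
    have hh0 : (h : ℤ) ≠ 0 := Int.natCast_ne_zero.mpr (by omega)
    rw [Pig_chi]
    have hcond : ∀ j ∈ range (2 * h * m + 1),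
        (if ((2*h : ℕ) : ℤ) ∣ (((2*h*m : ℕ) : ℤ) - 2 * j) then
          AddMonoidAlgebra.single ((((2*h*m : ℕ) : ℤ) - 2 * j) / (2*h : ℕ)) (1 : ℤ) else 0)
        = if h ∣ j then AddMonoidAlgebra.single ((((2*h*m : ℕ) : ℤ) - 2 * j) / (2*h : ℕ)) (1 : ℤ) else 0 := by
      intro j hj
      simp only [mem_range] at hj
      congr 1
      rw [eq_iff_iff]
      have key : ((2*h : ℕ) : ℤ) ∣ (((2*h*m : ℕ) : ℤ) - 2 * j) ↔ (h : ℤ) ∣ (h : ℤ) * m - j := by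
        push_cast
        rw [show (2:ℤ) * h * m - 2 * j = 2 * (h * m - j) by ring]
        constructor
        · intro ⟨c, hc⟩; exact ⟨c, by linarith⟩
        · intro ⟨c, hc⟩; exact ⟨c, by push_cast; linarith⟩
      rw [key]
      constructor
      · intro hd
        have : (h : ℤ) ∣ (j : ℤ) := (dvd_sub_right (dvd_mul_right (h:ℤ) (m:ℤ))).mp hd
        exact_mod_cast this
      · intro hd
        exact dvd_sub (dvd_mul_right (h:ℤ) (m:ℤ)) (by exact_mod_cast hd)
    rw [Finset.sum_congr rfl hcond, ← Finset.sum_filter]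
    have step1 : ∑ j ∈ (range (2*h*m + 1)).filter (fun j => h ∣ j),
        (AddMonoidAlgebra.single ((((2*h*m : ℕ) : ℤ) - 2 * j) / (2*h : ℕ)) (1 : ℤ))
        = ∑ k ∈ range (2*m + 1), AddMonoidAlgebra.single ((m : ℤ) - k) (1 : ℤ) := by
      refine Finset.sum_nbij' (fun j => j / h) (fun k => h * k) ?_ ?_ ?_ ?_ ?_
      · intro j hj
        simp only [mem_filter, mem_range] at hj ⊢
        obtain ⟨k, rfl⟩ := hj.2
        rw [Nat.mul_div_cancel_left _ hh]
        nlinarith [hj.1]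
      · intro k hk
        simp only [mem_filter, mem_range] at hk ⊢
        exact ⟨by nlinarith, Dvd.intro k rfl⟩
      · intro j hj
        simp only [mem_filter] at hj
        exact Nat.mul_div_cancel' hj.2
      · intro k _; exact Nat.mul_div_cancel_left _ hh
      · intro j hj
        simp only [mem_filter, mem_range] at hj
        obtain ⟨k, rfl⟩ := hj.2
        simp only [Nat.mul_div_cancel_left _ hh]
        congr 1
        push_cast
        rw [show (2:ℤ) * h * m - 2 * (h * k) = (2 * h) * (m - k) by ring,
          Int.mul_ediv_cancel_left _ (by exact_mod_cast (by omega : (2*h : ℕ) ≠ 0))]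
    rw [step1]
    unfold chi
    rw [← Finset.sum_filter_add_sum_filter_not (range (2*m+1)) (fun k => Even k)]
    congr 1
    · refine Finset.sum_nbij' (fun k => k / 2) (fun j => 2 * j) ?_ ?_ ?_ ?_ ?_ <;>
        intro a ha <;> beta_reduce <;>
        simp only [mem_filter, mem_range, Nat.even_iff, Nat.not_even_iff] at ha <;>
        first
          | (simp only [mem_filter, mem_range, Nat.even_iff, Nat.not_even_iff]; omega)
          | omega
          | (congr 1; omega)
    · refine Finset.sum_nbij' (fun k => k / 2) (fun j => 2 * j + 1) ?_ ?_ ?_ ?_ ?_ <;>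
        intro a ha <;> beta_reduce <;>
        simp only [mem_filter, mem_range, Nat.even_iff, Nat.not_even_iff] at ha <;>
        first
          | (simp only [mem_filter, mem_range, Nat.even_iff, Nat.not_even_iff]; omega)
          | omega
          | (congr 1; push_cast [Nat.cast_sub hm]; omega)
          | (congr 1; omega)
  · intro _
    have h0 : chi 0 = AddMonoidAlgebra.single (0 : ℤ) 1 := by unfold chi; simp
    rw [h0]
    unfold Pig
    rw [AddMonoidAlgebra.coeff_single, Finsupp.sum_single_index (by split <;> simp)]
    simp
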